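/- Let f : ℝ^d → ℝ be L-smooth (L > 0) and bounded below by f* ∈ ℝ, let x⁰ ∈ ℝ^d, and set Δ = f(x⁰) − f*. Let σ² > 0 and ε > 0. Let G be a stochastic gradient oracle for f with variance σ² on a probability space (Ω, P), let S = max{⌈σ²/ε⌉, 1}, and let {ξ^{k,i}}_{k ≥ 0, 1 ≤ i ≤ S} be an i.i.d. family of Ω-valued random elements. Define the minibatch iterates of Rennala SGD by x^{k+1} = x^k − γ·(1/S)·∑_{i=1}^S G(x^k, ξ^{k,i}) with stepsize γ = min{1/L, εS/(2Lσ²)}. Then for every natural number K ≥ 24ΔL/ε, we have (1/K)·∑_{k=0}^{K−1} E[‖∇f(x^k)‖²] ≤ ε. -/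

import Mathlib

open MeasureTheory ProbabilityTheory Finset
set_option maxHeartbeats 1000000

lemma descent {d : ℕ} {f : EuclideanSpace ℝ (Fin d) → ℝ} {L : ℝ} (hL : 0 ≤ L)
    (hdiff : Differentiable ℝ f)
    (hsmooth : ∀ x y, ‖gradient f x - gradient f y‖ ≤ L * ‖x - y‖) (x y : EuclideanSpace ℝ (Fin d)) :
    f y ≤ f x + inner ℝ (gradient f x) (y - x) + L / 2 * ‖y - x‖ ^ 2 := by
  set v := y - x with hv
  have hGrcont : Continuous (gradient f) := by
    refine (LipschitzWith.of_dist_le_mul (K := L.toNNReal) (fun a b => ?_)).continuous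
    rw [dist_eq_norm]
    exact (hsmooth a b).trans (by rw [Real.coe_toNNReal L hL, dist_eq_norm])
  set c : ℝ → EuclideanSpace ℝ (Fin d) := fun t => x + t • v with hc
  have hcd : ∀ t : ℝ, HasDerivAt c v t := by
    intro t
    have := ((hasDerivAt_id t).smul_const v).const_add x
    rw [one_smul] at this
    exact this
  set g : ℝ → ℝ := fun t => inner ℝ (gradient f (c t)) v with hg
  have hφd : ∀ t : ℝ, HasDerivAt (fun s => f (c s)) (g t) t := by
    intro t
    have h1 : HasFDerivAt f (fderiv ℝ f (c t)) (c t) := (hdiff (c t)).hasFDerivAt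
    have := h1.comp_hasDerivAt t (hcd t)
    have h2 : fderiv ℝ f (c t) v = inner ℝ (gradient f (c t)) v := by
      rw [gradient]
      simp [InnerProductSpace.toDual_apply_apply]
    convert this using 1
    exacts [rfl, rfl, rfl, h2.symm]
  have hgcont : Continuous g := by
    exact (hGrcont.comp (by continuity)).inner continuous_const
  have hint : ∀ a b : ℝ, IntervalIntegrable g MeasureTheory.volume a b :=
    fun a b => hgcont.intervalIntegrable a b
  have key : f y - f x = ∫ t in (0:ℝ)..1, g t := by
    have := intervalIntegral.integral_eq_sub_of_hasDerivAt (f := fun s => f (c s))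
      (f' := g) (a := 0) (b := 1) (fun t _ => hφd t) (hint 0 1)
    rw [this]
    simp [hc, hv]
  have hbound : ∀ t ∈ Set.Icc (0:ℝ) 1, g t ≤ inner ℝ (gradient f x) v + L * t * ‖v‖^2 := by
    intro t ht
    have : g t - inner ℝ (gradient f x) v = inner ℝ (gradient f (c t) - gradient f x) v := by
      rw [hg]; rw [inner_sub_left]
    have hb : inner ℝ (gradient f (c t) - gradient f x) v ≤ L * t * ‖v‖^2 := by
      calc inner ℝ (gradient f (c t) - gradient f x) v ≤ ‖gradient f (c t) - gradient f x‖ * ‖v‖ :=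
            real_inner_le_norm _ _
        _ ≤ (L * ‖c t - x‖) * ‖v‖ := by
            exact mul_le_mul_of_nonneg_right (hsmooth (c t) x) (norm_nonneg v)
        _ = L * t * ‖v‖^2 := by
            have : ‖c t - x‖ = t * ‖v‖ := by
              simp [hc, norm_smul, abs_of_nonneg ht.1]
            rw [this]; ring
    linarith [this ▸ hb, this]
  have hmono : (∫ t in (0:ℝ)..1, g t) ≤ ∫ t in (0:ℝ)..1, (inner ℝ (gradient f x) v + L * t * ‖v‖^2) := by
    apply intervalIntegral.integral_mono_on zero_le_one (hint 0 1)
    · exact (continuous_const.add ((continuous_const.mul continuous_id).mul continuous_const)).intervalIntegrable 0 1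
    · exact hbound
  have hval : (∫ t in (0:ℝ)..1, (inner ℝ (gradient f x) v + L * t * ‖v‖^2))
      = inner ℝ (gradient f x) v + L / 2 * ‖v‖^2 := by
    have h2 : (∫ t in (0:ℝ)..1, L * t * ‖v‖^2) = L/2 * ‖v‖^2 := by
      have he : ∀ t : ℝ, L * t * ‖v‖^2 = (L*‖v‖^2) * t := fun t => by ring
      simp_rw [he]
      rw [intervalIntegral.integral_const_mul, integral_id]
      ring
    rw [intervalIntegral.integral_add intervalIntegrable_const
      (((by fun_prop : Continuous fun t : ℝ => L * t * ‖v‖^2)).intervalIntegrable 0 1), h2,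
      intervalIntegral.integral_const]
    simp
  linarith [key ▸ (hmono.trans_eq hval), hmono.trans_eq hval, key]

lemma indep_of_biSup_meas {ι Ω' Ω β : Type*} [MeasurableSpace Ω'] [MeasurableSpace Ω]
    [MeasurableSpace β] {Q : Measure Ω'} [IsProbabilityMeasure Q]
    {ξ : ι → Ω' → Ω} (hξ : ∀ p, Measurable (ξ p))
    (hind : iIndepFun ξ Q) (A : Set ι) (p : ι) (hp : p ∉ A)
    (W : Ω' → β)
    (hW : @Measurable Ω' β (⨆ q ∈ A, MeasurableSpace.comap (ξ q) inferInstance) _ W) :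
    IndepFun W (ξ p) Q := by
  have h1 : Indep (⨆ q ∈ A, MeasurableSpace.comap (ξ q) inferInstance)
      (⨆ q ∈ ({p} : Set ι), MeasurableSpace.comap (ξ q) inferInstance) Q :=
    indep_iSup_of_disjoint (fun q => (hξ q).comap_le) hind
      (by simpa [Set.disjoint_singleton_right] using hp)
  have h2 : Indep (MeasurableSpace.comap W inferInstance)
      (MeasurableSpace.comap (ξ p) inferInstance) Q := by
    refine indep_of_indep_of_le_left (indep_of_indep_of_le_right h1 ?_) ?_
    · exact le_iSup₂ (f := fun q (_ : q ∈ ({p} : Set ι)) =>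
        MeasurableSpace.comap (ξ q) inferInstance) p rfl
    · exact hW.comap_le
  exact h2

lemma pair_map_eq {Ω' Ω β : Type*} [MeasurableSpace Ω'] [MeasurableSpace Ω]
    [MeasurableSpace β] {Q : Measure Ω'} [IsProbabilityMeasure Q]
    {W : Ω' → β} {Y : Ω' → Ω} (hW : Measurable W) (hY : Measurable Y)
    (h : IndepFun W Y Q) :
    Q.map (fun ω => (W ω, Y ω)) = (Q.map W).prod (Q.map Y) :=
  (indepFun_iff_map_prod_eq_prod_map_map hW.aemeasurable hY.aemeasurable).mp h

lemma comp_integrable_iff {Ω' Ω β F : Type*} [MeasurableSpace Ω'] [MeasurableSpace Ω]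
    [MeasurableSpace β] [NormedAddCommGroup F]
    {Q : Measure Ω'} {W : Ω' → β} {Y : Ω' → Ω} (hW : Measurable W) (hY : Measurable Y)
    {μ : Measure (β × Ω)}
    (hmap : Q.map (fun ω => (W ω, Y ω)) = μ)
    {ψ : β × Ω → F} (hψ : StronglyMeasurable ψ) :
    Integrable (fun ω => ψ (W ω, Y ω)) Q ↔ Integrable ψ μ := by
  rw [← hmap,
    integrable_map_measure hψ.aestronglyMeasurable (hW.prodMk hY).aemeasurable]
  rfl

lemma comp_integral_eq {Ω' Ω β F : Type*} [MeasurableSpace Ω'] [MeasurableSpace Ω]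
    [MeasurableSpace β] [NormedAddCommGroup F] [NormedSpace ℝ F]
    {Q : Measure Ω'} {W : Ω' → β} {Y : Ω' → Ω} (hW : Measurable W) (hY : Measurable Y)
    {μ : Measure (β × Ω)}
    (hmap : Q.map (fun ω => (W ω, Y ω)) = μ)
    {ψ : β × Ω → F} (hψ : StronglyMeasurable ψ) :
    ∫ ω, ψ (W ω, Y ω) ∂Q = ∫ z, ψ z ∂μ := by
  rw [← hmap, integral_map (hW.prodMk hY).aemeasurable hψ.aestronglyMeasurable]

variable {d : ℕ}
local notation "E" => EuclideanSpace ℝ (Fin d)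

lemma fst_integrable {β Ω : Type*} [MeasurableSpace β] [MeasurableSpace Ω]
    {ρ : Measure β} {P : Measure Ω} [SFinite ρ] [IsProbabilityMeasure P]
    {h : β → ℝ} (hh : Integrable h ρ) :
    Integrable (fun z : β × Ω => h z.1) (ρ.prod P) := by
  have : (fun z : β × Ω => h z.1) = h ∘ Prod.fst := rfl
  rw [this, ← integrable_map_measure (by rw [Measure.map_fst_prod]; simpa using hh.1)
    measurable_fst.aemeasurable, Measure.map_fst_prod]
  simpa using hh

lemma cross_zero {β Ω : Type*} [MeasurableSpace β] [MeasurableSpace Ω]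
    {ρ : Measure β} {P : Measure Ω} [IsProbabilityMeasure ρ] [IsProbabilityMeasure P]
    {U : β → E} (hU : Measurable U) (hUint : Integrable (fun b => ‖U b‖) ρ)
    {g : β × Ω → E} (hg : Measurable g)
    (hgint : ∀ b, Integrable (fun ω => g (b, ω)) P)
    (hgzero : ∀ b, ∫ ω, g (b, ω) ∂P = 0)
    {C : ℝ} (hgnorm : ∀ b, ∫ ω, ‖g (b, ω)‖ ∂P ≤ C) :
    Integrable (fun z : β × Ω => (inner ℝ (U z.1) (g z) : ℝ)) (ρ.prod P) ∧
      ∫ z, (inner ℝ (U z.1) (g z) : ℝ) ∂(ρ.prod P) = 0 := by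
  have hmeas : Measurable (fun z : β × Ω => (inner ℝ (U z.1) (g z) : ℝ)) :=
    (hU.comp measurable_fst).inner hg
  have hint : Integrable (fun z : β × Ω => (inner ℝ (U z.1) (g z) : ℝ)) (ρ.prod P) := by
    rw [integrable_prod_iff hmeas.aestronglyMeasurable]
    constructor
    · exact Filter.Eventually.of_forall fun b => (hgint b).const_inner (U b)
    · apply Integrable.mono' (hUint.mul_const C)
        (hmeas.norm.stronglyMeasurable.integral_prod_right').aestronglyMeasurable
      refine Filter.Eventually.of_forall fun b => ?_
      have h1 : ∀ ω, ‖(inner ℝ (U b) (g (b, ω)) : ℝ)‖ ≤ ‖U b‖ * ‖g (b, ω)‖ := by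
        intro ω
        rw [Real.norm_eq_abs]
        exact abs_real_inner_le_norm _ _
      have h2 : (∫ ω, ‖(inner ℝ (U b) (g (b, ω)) : ℝ)‖ ∂P) ≤ ∫ ω, ‖U b‖ * ‖g (b, ω)‖ ∂P := by
        apply integral_mono ((hgint b).const_inner (U b)).norm
          (((hgint b).norm).const_mul _) h1
      rw [Real.norm_eq_abs, abs_of_nonneg (integral_nonneg fun ω => norm_nonneg _)]
      refine h2.trans ?_
      rw [integral_const_mul]
      exact mul_le_mul_of_nonneg_left (hgnorm b) (norm_nonneg _)
  refine ⟨hint, ?_⟩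
  rw [integral_prod _ hint]
  have : ∀ b, (∫ ω, (inner ℝ (U b) (g (b, ω)) : ℝ) ∂P) = 0 := by
    intro b
    rw [integral_inner (hgint b) (U b), hgzero b, inner_zero_right]
  simp only [this, integral_zero]

lemma sq_bdd {β Ω : Type*} [MeasurableSpace β] [MeasurableSpace Ω]
    {ρ : Measure β} {P : Measure Ω} [IsProbabilityMeasure ρ] [IsProbabilityMeasure P]
    {g : β × Ω → E} (hg : Measurable g)
    (h2 : ∀ b, Integrable (fun ω => ‖g (b, ω)‖^2) P)
    {σ2 : ℝ} (hσ : ∀ b, ∫ ω, ‖g (b, ω)‖^2 ∂P ≤ σ2) :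
    Integrable (fun z : β × Ω => ‖g z‖^2) (ρ.prod P) ∧
      ∫ z, ‖g z‖^2 ∂(ρ.prod P) ≤ σ2 := by
  have hmeas : Measurable (fun z : β × Ω => ‖g z‖^2) := hg.norm.pow_const 2
  have hint : Integrable (fun z : β × Ω => ‖g z‖^2) (ρ.prod P) := by
    rw [integrable_prod_iff hmeas.aestronglyMeasurable]
    refine ⟨Filter.Eventually.of_forall h2, ?_⟩
    apply Integrable.mono' (integrable_const σ2)
      (hmeas.norm.stronglyMeasurable.integral_prod_right').aestronglyMeasurable
    refine Filter.Eventually.of_forall fun b => ?_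
    have : ∀ ω, ‖(‖g (b, ω)‖^2 : ℝ)‖ = ‖g (b, ω)‖^2 := fun ω => by
      rw [Real.norm_eq_abs, abs_of_nonneg (by positivity)]
    rw [Real.norm_eq_abs, abs_of_nonneg (integral_nonneg fun ω => norm_nonneg _)]
    calc (∫ ω, ‖(‖g (b, ω)‖^2 : ℝ)‖ ∂P) = ∫ ω, ‖g (b, ω)‖^2 ∂P := by simp_rw [this]
      _ ≤ σ2 := hσ b
  refine ⟨hint, ?_⟩
  rw [integral_prod _ hint]
  calc (∫ b, ∫ ω, ‖g (b, ω)‖^2 ∂P ∂ρ) ≤ ∫ _, σ2 ∂ρ :=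
        integral_mono hint.integral_prod_left (integrable_const _) hσ
    _ = σ2 := by simp
theorem stmt9 {d : ℕ} (f : EuclideanSpace ℝ (Fin d) → ℝ)
    (L : ℝ) (hL : 0 < L)
    (hdiff : Differentiable ℝ f)
    (hsmooth : ∀ x y, ‖gradient f x - gradient f y‖ ≤ L * ‖x - y‖)
    (fstar : ℝ) (hlb : ∀ x, fstar ≤ f x)
    (x₀ : EuclideanSpace ℝ (Fin d)) (Δ : ℝ) (hΔ : Δ = f x₀ - fstar)
    (σ2 ε : ℝ) (hσ2 : 0 < σ2) (hε : 0 < ε)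
    {Ω : Type*} [MeasurableSpace Ω] (P : Measure Ω) [IsProbabilityMeasure P]
    (G : EuclideanSpace ℝ (Fin d) → Ω → EuclideanSpace ℝ (Fin d))
    (hGmeas : Measurable (fun q : EuclideanSpace ℝ (Fin d) × Ω => G q.1 q.2))
    (hGint : ∀ x, Integrable (G x) P)
    (hGsqint : ∀ x, Integrable (fun ω => ‖G x ω - gradient f x‖^2) P)
    (hGunbiased : ∀ x, ∫ ω, G x ω ∂P = gradient f x)
    (hGvar : ∀ x, ∫ ω, ‖G x ω - gradient f x‖^2 ∂P ≤ σ2)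
    (S : ℕ) (hS : S = max ⌈σ2 / ε⌉₊ 1)
    {Ω' : Type*} [MeasurableSpace Ω'] (Q : Measure Ω') [IsProbabilityMeasure Q]
    (ξ : ℕ × Fin S → Ω' → Ω) (hξmeas : ∀ p, Measurable (ξ p))
    (hindep : iIndepFun ξ Q)
    (hdist : ∀ p, Measure.map (ξ p) Q = P)
    (γ : ℝ) (hγ : γ = min (1 / L) (ε * S / (2 * L * σ2)))
    (x : ℕ → Ω' → EuclideanSpace ℝ (Fin d))
    (hx0 : ∀ ω, x 0 ω = x₀)
    (hxrec : ∀ k ω, x (k + 1) ω =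
      x k ω - (γ * (1 / (S : ℝ))) • ∑ i : Fin S, G (x k ω) (ξ (k, i) ω)) :
    ∀ K : ℕ, 24 * Δ * L / ε ≤ K →
      (1 / (K : ℝ)) * ∑ k ∈ Finset.range K, ∫ ω, ‖gradient f (x k ω)‖^2 ∂Q ≤ ε := by
  -- notation
  have hGrcont : Continuous (gradient f) := by
    refine (LipschitzWith.of_dist_le_mul (K := L.toNNReal) (fun a b => ?_)).continuous
    rw [dist_eq_norm]
    exact (hsmooth a b).trans (by rw [Real.coe_toNNReal L hL.le, dist_eq_norm])
  have hGrmeas : Measurable (gradient f) := hGrcont.measurable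
  have hfcont : Continuous f := hdiff.continuous
  have hdesc : ∀ p q, f q ≤ f p + inner ℝ (gradient f p) (q - p) + L / 2 * ‖q - p‖ ^ 2 :=
    descent hL.le hdiff hsmooth
  -- numeric facts
  have hS1 : 1 ≤ S := hS ▸ le_max_right _ _
  have hSpos : (0:ℝ) < S := by exact_mod_cast Nat.lt_of_lt_of_le Nat.zero_lt_one hS1
  have hSne : (S:ℝ) ≠ 0 := ne_of_gt hSpos
  have hσ2S : σ2 ≤ ε * S := by
    have h1 : σ2 / ε ≤ (⌈σ2 / ε⌉₊ : ℝ) := Nat.le_ceil _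
    have h2 : (⌈σ2 / ε⌉₊ : ℝ) ≤ S := by exact_mod_cast hS ▸ le_max_left _ _
    have := (div_le_iff₀ hε).mp (h1.trans h2)
    linarith
  have hγ1 : γ ≤ 1 / L := hγ ▸ min_le_left _ _
  have hγ2 : γ ≤ ε * S / (2 * L * σ2) := hγ ▸ min_le_right _ _
  have hγlow : 1 / (2 * L) ≤ γ := by
    rw [hγ, le_min_iff]
    constructor
    · rw [div_le_div_iff₀ (by positivity) hL]; nlinarith
    · rw [div_le_div_iff₀ (by positivity) (by positivity)]; nlinarith
  have hγpos : 0 < γ := lt_of_lt_of_le (by positivity) hγlow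
  have hγL : L * γ ≤ 1 := by
    have := mul_le_mul_of_nonneg_left hγ1 hL.le
    rwa [mul_one_div, div_self (ne_of_gt hL)] at this
  have hΔ0 : 0 ≤ Δ := by rw [hΔ]; linarith [hlb x₀]
  -- filtration
  have hmF_le : ∀ k : ℕ, (⨆ q ∈ {q : ℕ × Fin S | q.1 < k},
      MeasurableSpace.comap (ξ q) inferInstance) ≤ ‹MeasurableSpace Ω'› :=
    fun k => iSup₂_le fun q _ => (hξmeas q).comap_le
  have hmF_mono : ∀ k : ℕ, (⨆ q ∈ {q : ℕ × Fin S | q.1 < k},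
        MeasurableSpace.comap (ξ q) inferInstance) ≤
      (⨆ q ∈ {q : ℕ × Fin S | q.1 < k + 1}, MeasurableSpace.comap (ξ q) inferInstance) :=
    fun k => biSup_mono (fun q hq => Nat.lt_succ_of_lt hq)
  have hxF : ∀ k : ℕ, Measurable[⨆ q ∈ {q : ℕ × Fin S | q.1 < k},
      MeasurableSpace.comap (ξ q) inferInstance] (x k) := by
    intro k
    induction k with
    | zero =>
      have hx : x 0 = fun _ => x₀ := funext hx0
      rw [hx]; exact measurable_const
    | succ k ih =>
      have hxk : Measurable[⨆ q ∈ {q : ℕ × Fin S | q.1 < k + 1},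
          MeasurableSpace.comap (ξ q) inferInstance] (x k) := ih.mono (hmF_mono k) le_rfl
      have hξk : ∀ i : Fin S, Measurable[⨆ q ∈ {q : ℕ × Fin S | q.1 < k + 1},
          MeasurableSpace.comap (ξ q) inferInstance] (ξ (k, i)) := by
        intro i
        refine measurable_iff_comap_le.mpr ?_
        exact le_iSup₂ (f := fun (q : ℕ × Fin S) (_ : q ∈ {q : ℕ × Fin S | q.1 < k + 1}) =>
          MeasurableSpace.comap (ξ q) inferInstance) (k, i) (Nat.lt_succ_self k)
      have hx : x (k+1) = fun ω =>
          x k ω - (γ * (1 / (S : ℝ))) • ∑ i : Fin S, G (x k ω) (ξ (k, i) ω) :=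
        funext (hxrec k)
      rw [hx]
      exact hxk.sub ((Finset.measurable_sum Finset.univ
        (fun i _ => hGmeas.comp (hxk.prodMk (hξk i)))).const_smul (γ * (1 / (S : ℝ))))
  have hxmeas : ∀ k, Measurable (x k) := fun k => (hxF k).mono (hmF_le k) le_rfl
  haveI hμprob : ∀ k : ℕ, IsProbabilityMeasure (Q.map (x k)) :=
    fun k => Measure.isProbabilityMeasure_map (hxmeas k).aemeasurable
  -- pair laws
  have hpair : ∀ k (i : Fin S),
      Q.map (fun ω => (x k ω, ξ (k, i) ω)) = (Q.map (x k)).prod P := by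
    intro k i
    have hw := indep_of_biSup_meas hξmeas hindep {q : ℕ × Fin S | q.1 < k} (k, i)
      (by simp) (x k) (hxF k)
    have := pair_map_eq (hxmeas k) (hξmeas (k, i)) hw
    rwa [hdist (k, i)] at this
  have htri : ∀ k (i j : Fin S), i ≠ j →
      Q.map (fun ω => ((x k ω, ξ (k, i) ω), ξ (k, j) ω)) = ((Q.map (x k)).prod P).prod P := by
    intro k i j hij
    have hWA : Measurable[⨆ q ∈ insert ((k, i) : ℕ × Fin S) {q : ℕ × Fin S | q.1 < k},
        MeasurableSpace.comap (ξ q) inferInstance] (fun ω => (x k ω, ξ (k, i) ω)) := by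
      have h1 : (⨆ q ∈ {q : ℕ × Fin S | q.1 < k}, MeasurableSpace.comap (ξ q) inferInstance) ≤
          ⨆ q ∈ insert ((k, i) : ℕ × Fin S) {q : ℕ × Fin S | q.1 < k},
            MeasurableSpace.comap (ξ q) inferInstance :=
        biSup_mono (Set.subset_insert _ _)
      have h2 : MeasurableSpace.comap (ξ (k, i)) inferInstance ≤
          ⨆ q ∈ insert ((k, i) : ℕ × Fin S) {q : ℕ × Fin S | q.1 < k},
            MeasurableSpace.comap (ξ q) inferInstance :=
        le_iSup₂ (f := fun (q : ℕ × Fin S)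
          (_ : q ∈ insert ((k, i) : ℕ × Fin S) {q : ℕ × Fin S | q.1 < k}) =>
          MeasurableSpace.comap (ξ q) inferInstance) (k, i) (Set.mem_insert _ _)
      exact Measurable.prodMk ((hxF k).mono h1 le_rfl) (measurable_iff_comap_le.mpr h2)
    have hp : ((k, j) : ℕ × Fin S) ∉ insert ((k, i) : ℕ × Fin S) {q : ℕ × Fin S | q.1 < k} := by
      simp [Prod.ext_iff, hij.symm]
    have hw := indep_of_biSup_meas hξmeas hindep _ (k, j) hp _ hWA
    have := pair_map_eq ((hxmeas k).prodMk (hξmeas (k, i))) (hξmeas (k, j)) hw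
    rwa [hdist (k, j), hpair k i] at this
  -- basic bounds
  have hGrb : ∀ z : EuclideanSpace ℝ (Fin d), ‖gradient f z‖ ≤ ‖gradient f 0‖ + L * ‖z‖ := by
    intro z
    have h1 := hsmooth z 0
    rw [sub_zero] at h1
    have h2 := norm_sub_norm_le (gradient f z) (gradient f 0)
    linarith
  -- transfer second moments to the law of x k
  have hμ2' : ∀ k, Integrable (fun ω => ‖x k ω‖^2) Q →
      Integrable (fun z : EuclideanSpace ℝ (Fin d) => ‖z‖^2) (Q.map (x k)) := by
    intro k hk
    exact (integrable_map_measure (continuous_norm.pow 2).aestronglyMeasurable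
      (hxmeas k).aemeasurable).mpr hk
  have hGr2μ' : ∀ k, Integrable (fun z : EuclideanSpace ℝ (Fin d) => ‖z‖^2) (Q.map (x k)) →
      Integrable (fun z : EuclideanSpace ℝ (Fin d) => ‖gradient f z‖^2) (Q.map (x k)) := by
    intro k hk
    apply Integrable.mono' ((integrable_const (2*‖gradient f 0‖^2)).add (hk.const_mul (2*L^2)))
      ((hGrcont.norm.pow 2).aestronglyMeasurable)
    refine Filter.Eventually.of_forall fun z => ?_
    simp only [Pi.add_apply, Pi.pow_apply]
    beta_reduce
    rw [Real.norm_eq_abs, abs_of_nonneg (by positivity)]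
    nlinarith [hGrb z, norm_nonneg z, norm_nonneg (gradient f z), sq_nonneg (L * ‖z‖ - ‖gradient f 0‖)]
  have hGsecmeas : Measurable (fun z : EuclideanSpace ℝ (Fin d) × Ω => ‖G z.1 z.2‖^2) :=
    hGmeas.norm.pow_const 2
  have hGsec : ∀ b, Integrable (fun ω => ‖G b ω‖^2) P := by
    intro b
    have hGb : Measurable (fun ω => G b ω) := by
      exact hGmeas.comp (measurable_const.prodMk measurable_id)
    apply Integrable.mono' (((hGsqint b).const_mul 2).add (integrable_const (2*‖gradient f b‖^2)))
      (hGb.norm.pow_const 2).aestronglyMeasurable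
    refine Filter.Eventually.of_forall fun ω => ?_
    simp only [Pi.add_apply]
    beta_reduce
    rw [Real.norm_eq_abs, abs_of_nonneg (by positivity)]
    have h := norm_add_le (G b ω - gradient f b) (gradient f b)
    rw [sub_add_cancel] at h
    nlinarith [norm_nonneg (G b ω - gradient f b), norm_nonneg (gradient f b),
      sq_nonneg (‖G b ω - gradient f b‖ - ‖gradient f b‖),
      mul_self_le_mul_self (norm_nonneg (G b ω)) h]
  have hGsecval : ∀ b, ∫ ω, ‖G b ω‖^2 ∂P ≤ 2*σ2 + 2*‖gradient f b‖^2 := by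
    intro b
    calc ∫ ω, ‖G b ω‖^2 ∂P
        ≤ ∫ ω, (2*‖G b ω - gradient f b‖^2 + 2*‖gradient f b‖^2) ∂P := by
          apply integral_mono (hGsec b)
            (((hGsqint b).const_mul 2).add (integrable_const _))
          intro ω
          simp only [Pi.add_apply]
          beta_reduce
          have h := norm_add_le (G b ω - gradient f b) (gradient f b)
          rw [sub_add_cancel] at h
          nlinarith [norm_nonneg (G b ω - gradient f b), norm_nonneg (gradient f b),
            sq_nonneg (‖G b ω - gradient f b‖ - ‖gradient f b‖),
            mul_self_le_mul_self (norm_nonneg (G b ω)) h]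
      _ = 2*(∫ ω, ‖G b ω - gradient f b‖^2 ∂P) + 2*‖gradient f b‖^2 := by
          rw [integral_add ((hGsqint b).const_mul 2) (integrable_const _), integral_const_mul]
          simp
      _ ≤ 2*σ2 + 2*‖gradient f b‖^2 := by nlinarith [hGvar b]
  have hG2prod' : ∀ k,
      Integrable (fun z : EuclideanSpace ℝ (Fin d) => ‖gradient f z‖^2) (Q.map (x k)) →
      Integrable (fun z : EuclideanSpace ℝ (Fin d) × Ω => ‖G z.1 z.2‖^2)
        ((Q.map (x k)).prod P) := by
    intro k hk
    rw [integrable_prod_iff hGsecmeas.aestronglyMeasurable]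
    constructor
    · exact Filter.Eventually.of_forall fun b => hGsec b
    · apply Integrable.mono' ((integrable_const (2*σ2)).add (hk.const_mul 2))
        (hGsecmeas.norm.stronglyMeasurable.integral_prod_right').aestronglyMeasurable
      refine Filter.Eventually.of_forall fun b => ?_
      simp only [Pi.add_apply]
      beta_reduce
      rw [Real.norm_eq_abs, abs_of_nonneg (integral_nonneg fun ω => norm_nonneg _)]
      have heq : (∫ ω, ‖(‖G b ω‖^2 : ℝ)‖ ∂P) = ∫ ω, ‖G b ω‖^2 ∂P := by
        congr 1; funext ω; rw [Real.norm_eq_abs, abs_of_nonneg (by positivity)]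
      rw [heq]
      exact hGsecval b
  -- L² bound on the iterates
  have hI : ∀ k, Integrable (fun ω => ‖x k ω‖^2) Q := by
    intro k
    induction k with
    | zero =>
      have hx : (fun ω => ‖x 0 ω‖^2) = fun _ => ‖x₀‖^2 := by funext ω; rw [hx0]
      rw [hx]; exact integrable_const _
    | succ k IH =>
      have hGcomp : ∀ i : Fin S, Integrable (fun ω => ‖G (x k ω) (ξ (k, i) ω)‖^2) Q := by
        intro i
        exact (comp_integrable_iff (hxmeas k) (hξmeas (k, i)) (hpair k i)
          hGsecmeas.stronglyMeasurable).mpr (hG2prod' k (hGr2μ' k (hμ2' k IH)))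
      apply Integrable.mono' ((IH.const_mul 2).add
        ((integrable_finset_sum Finset.univ (fun i _ => hGcomp i)).const_mul
          (2*(γ*(1/(S:ℝ)))^2*S)))
        (((hxmeas (k+1)).norm.pow_const 2).aestronglyMeasurable)
      refine Filter.Eventually.of_forall fun ω => ?_
      simp only [Pi.add_apply]
      beta_reduce
      rw [Real.norm_eq_abs, abs_of_nonneg (by positivity), hxrec k ω]
      have h1 := norm_sub_le (x k ω) ((γ * (1/(S:ℝ))) • ∑ i : Fin S, G (x k ω) (ξ (k, i) ω))
      have h2 : ‖(γ * (1/(S:ℝ))) • ∑ i : Fin S, G (x k ω) (ξ (k, i) ω)‖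
          = |γ * (1/(S:ℝ))| * ‖∑ i : Fin S, G (x k ω) (ξ (k, i) ω)‖ := by
        rw [norm_smul, Real.norm_eq_abs]
      have h3 : ‖∑ i : Fin S, G (x k ω) (ξ (k, i) ω)‖ ≤ ∑ i : Fin S, ‖G (x k ω) (ξ (k, i) ω)‖ :=
        norm_sum_le _ _
      have h4 : (∑ i : Fin S, ‖G (x k ω) (ξ (k, i) ω)‖)^2
          ≤ (S : ℝ) * ∑ i : Fin S, ‖G (x k ω) (ξ (k, i) ω)‖^2 := by
        have := sq_sum_le_card_mul_sum_sq (s := (Finset.univ : Finset (Fin S)))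
          (f := fun i => ‖G (x k ω) (ξ (k, i) ω)‖)
        simpa using this
      have h5 : (0:ℝ) ≤ ∑ i : Fin S, ‖G (x k ω) (ξ (k, i) ω)‖ :=
        Finset.sum_nonneg fun i _ => norm_nonneg _
      have h6 : ‖∑ i : Fin S, G (x k ω) (ξ (k, i) ω)‖^2
          ≤ (S : ℝ) * ∑ i : Fin S, ‖G (x k ω) (ξ (k, i) ω)‖^2 := by
        nlinarith [norm_nonneg (∑ i : Fin S, G (x k ω) (ξ (k, i) ω))]
      have h7 : (0:ℝ) ≤ (S : ℝ) * ∑ i : Fin S, ‖G (x k ω) (ξ (k, i) ω)‖^2 := by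
        apply mul_nonneg hSpos.le (Finset.sum_nonneg fun i _ => by positivity)
      calc ‖x k ω - (γ * (1/(S:ℝ))) • ∑ i : Fin S, G (x k ω) (ξ (k, i) ω)‖^2
          ≤ (‖x k ω‖ + |γ * (1/(S:ℝ))| * ‖∑ i : Fin S, G (x k ω) (ξ (k, i) ω)‖)^2 := by
            rw [← h2]
            exact pow_le_pow_left₀ (norm_nonneg _) h1 2
        _ ≤ 2*‖x k ω‖^2 + 2*(|γ * (1/(S:ℝ))| * ‖∑ i : Fin S, G (x k ω) (ξ (k, i) ω)‖)^2 := by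
            nlinarith [sq_nonneg (‖x k ω‖ - |γ * (1/(S:ℝ))| * ‖∑ i : Fin S, G (x k ω) (ξ (k, i) ω)‖)]
        _ = 2*‖x k ω‖^2 + 2*(γ * (1/(S:ℝ)))^2*‖∑ i : Fin S, G (x k ω) (ξ (k, i) ω)‖^2 := by
            rw [mul_pow, sq_abs]
            ring
        _ ≤ 2*‖x k ω‖^2 + 2*(γ * (1/(S:ℝ)))^2*((S:ℝ) * ∑ i : Fin S, ‖G (x k ω) (ξ (k, i) ω)‖^2) := by
            have := mul_le_mul_of_nonneg_left h6 (by positivity : (0:ℝ) ≤ 2*(γ * (1/(S:ℝ)))^2)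
            linarith
        _ = 2 * ‖x k ω‖ ^ 2 + 2 * (γ * (1 / (S:ℝ))) ^ 2 * (S:ℝ) * ∑ i : Fin S, ‖G (x k ω) (ξ (k, i) ω)‖ ^ 2 := by
            ring
  -- instantiated moment facts
  have hμ2 : ∀ k, Integrable (fun z : EuclideanSpace ℝ (Fin d) => ‖z‖^2) (Q.map (x k)) :=
    fun k => hμ2' k (hI k)
  have hGr2μ : ∀ k, Integrable (fun z : EuclideanSpace ℝ (Fin d) => ‖gradient f z‖^2)
      (Q.map (x k)) := fun k => hGr2μ' k (hμ2 k)
  have hGr1μ : ∀ k, Integrable (fun z : EuclideanSpace ℝ (Fin d) => ‖gradient f z‖)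
      (Q.map (x k)) := by
    intro k
    apply Integrable.mono' ((integrable_const (1:ℝ)).add (hGr2μ k))
      hGrcont.norm.aestronglyMeasurable
    refine Filter.Eventually.of_forall fun z => ?_
    simp only [Pi.add_apply]
    beta_reduce
    rw [Real.norm_eq_abs, abs_of_nonneg (norm_nonneg _)]
    nlinarith [sq_nonneg (‖gradient f z‖ - 1)]
  -- facts about the centered oracle
  have hDmeas : Measurable (fun z : EuclideanSpace ℝ (Fin d) × Ω => G z.1 z.2 - gradient f z.1) :=
    hGmeas.sub (hGrmeas.comp measurable_fst)
  have hDintP : ∀ b : EuclideanSpace ℝ (Fin d), Integrable (fun ω => G b ω - gradient f b) P :=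
    fun b => (hGint b).sub (integrable_const _)
  have hDzero : ∀ b : EuclideanSpace ℝ (Fin d), ∫ ω, (G b ω - gradient f b) ∂P = 0 := by
    intro b
    rw [integral_sub (hGint b) (integrable_const _), hGunbiased b, integral_const]
    simp
  have hDnorm1 : ∀ b : EuclideanSpace ℝ (Fin d),
      ∫ ω, ‖G b ω - gradient f b‖ ∂P ≤ (1 + σ2)/2 := by
    intro b
    have hinteg : Integrable (fun ω => (1 + ‖G b ω - gradient f b‖^2)/2) P := by
      exact ((integrable_const (1:ℝ)).add (hGsqint b)).div_const 2
    calc ∫ ω, ‖G b ω - gradient f b‖ ∂P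
        ≤ ∫ ω, (1 + ‖G b ω - gradient f b‖^2)/2 ∂P := by
          apply integral_mono (hDintP b).norm hinteg
          intro ω
          beta_reduce
          nlinarith [sq_nonneg (‖G b ω - gradient f b‖ - 1)]
      _ = (1 + ∫ ω, ‖G b ω - gradient f b‖^2 ∂P)/2 := by
          rw [integral_div, integral_add (integrable_const _) (hGsqint b), integral_const]
          simp
      _ ≤ (1 + σ2)/2 := by linarith [hGvar b]
  -- the centered samples on Q : integrability and mean-zero inner products
  have hT1 : ∀ k (i : Fin S),
      Integrable (fun ω => (inner ℝ (gradient f (x k ω))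
        (G (x k ω) (ξ (k, i) ω) - gradient f (x k ω)) : ℝ)) Q ∧
      ∫ ω, (inner ℝ (gradient f (x k ω))
        (G (x k ω) (ξ (k, i) ω) - gradient f (x k ω)) : ℝ) ∂Q = 0 := by
    intro k i
    have hcz := cross_zero (ρ := Q.map (x k)) (P := P) hGrmeas (hGr1μ k) hDmeas hDintP hDzero hDnorm1
    have hψ : StronglyMeasurable (fun z : EuclideanSpace ℝ (Fin d) × Ω =>
        (inner ℝ (gradient f z.1) (G z.1 z.2 - gradient f z.1) : ℝ)) :=
      ((hGrmeas.comp measurable_fst).inner hDmeas).stronglyMeasurable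
    constructor
    · exact (comp_integrable_iff (hxmeas k) (hξmeas (k, i)) (hpair k i) hψ).mpr hcz.1
    · exact (comp_integral_eq (hxmeas k) (hξmeas (k, i)) (hpair k i) hψ).trans hcz.2
  have hD2 : ∀ k (i : Fin S),
      Integrable (fun ω => ‖G (x k ω) (ξ (k, i) ω) - gradient f (x k ω)‖^2) Q ∧
      ∫ ω, ‖G (x k ω) (ξ (k, i) ω) - gradient f (x k ω)‖^2 ∂Q ≤ σ2 := by
    intro k i
    have hsq := sq_bdd (ρ := Q.map (x k)) (P := P) hDmeas hGsqint hGvar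
    have hψ : StronglyMeasurable (fun z : EuclideanSpace ℝ (Fin d) × Ω =>
        ‖G z.1 z.2 - gradient f z.1‖^2) := (hDmeas.norm.pow_const 2).stronglyMeasurable
    constructor
    · exact (comp_integrable_iff (hxmeas k) (hξmeas (k, i)) (hpair k i) hψ).mpr hsq.1
    · exact le_of_le_of_eq (le_of_eq (comp_integral_eq (hxmeas k) (hξmeas (k, i))
        (hpair k i) hψ)) rfl |>.trans hsq.2
  have hD12 : ∀ k (i j : Fin S), i ≠ j →
      Integrable (fun ω => (inner ℝ (G (x k ω) (ξ (k, i) ω) - gradient f (x k ω))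
        (G (x k ω) (ξ (k, j) ω) - gradient f (x k ω)) : ℝ)) Q ∧
      ∫ ω, (inner ℝ (G (x k ω) (ξ (k, i) ω) - gradient f (x k ω))
        (G (x k ω) (ξ (k, j) ω) - gradient f (x k ω)) : ℝ) ∂Q = 0 := by
    intro k i j hij
    have hUint : Integrable (fun b : EuclideanSpace ℝ (Fin d) × Ω =>
        ‖G b.1 b.2 - gradient f b.1‖) ((Q.map (x k)).prod P) := by
      apply Integrable.mono' ((integrable_const (1:ℝ)).add
        (sq_bdd (ρ := Q.map (x k)) (P := P) hDmeas hGsqint hGvar).1)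
        hDmeas.norm.aestronglyMeasurable
      refine Filter.Eventually.of_forall fun b => ?_
      simp only [Pi.add_apply]
      beta_reduce
      rw [Real.norm_eq_abs, abs_of_nonneg (norm_nonneg _)]
      nlinarith [sq_nonneg (‖G b.1 b.2 - gradient f b.1‖ - 1)]
    have hgmeas : Measurable (fun w : (EuclideanSpace ℝ (Fin d) × Ω) × Ω =>
        G w.1.1 w.2 - gradient f w.1.1) :=
      (hGmeas.comp ((measurable_fst.comp measurable_fst).prodMk measurable_snd)).sub
        (hGrmeas.comp (measurable_fst.comp measurable_fst))
    have hcz := cross_zero (ρ := (Q.map (x k)).prod P) (P := P) hDmeas hUint hgmeas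
      (fun b => hDintP b.1) (fun b => hDzero b.1) (fun b => hDnorm1 b.1)
    have hψ : StronglyMeasurable (fun w : (EuclideanSpace ℝ (Fin d) × Ω) × Ω =>
        (inner ℝ (G w.1.1 w.1.2 - gradient f w.1.1) (G w.1.1 w.2 - gradient f w.1.1) : ℝ)) :=
      ((hDmeas.comp measurable_fst).inner hgmeas).stronglyMeasurable
    have hW : Measurable (fun ω => (x k ω, ξ (k, i) ω)) := (hxmeas k).prodMk (hξmeas (k, i))
    constructor
    · exact (comp_integrable_iff hW (hξmeas (k, j)) (htri k i j hij) hψ).mpr hcz.1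
    · exact (comp_integral_eq hW (hξmeas (k, j)) (htri k i j hij) hψ).trans hcz.2
  -- integrability of f along the iterates
  have hx1int : ∀ k, Integrable (fun ω => ‖x k ω‖) Q := by
    intro k
    apply Integrable.mono' ((integrable_const (1:ℝ)).add (hI k))
      ((hxmeas k).norm.aestronglyMeasurable)
    refine Filter.Eventually.of_forall fun ω => ?_
    simp only [Pi.add_apply]
    beta_reduce
    rw [Real.norm_eq_abs, abs_of_nonneg (norm_nonneg _)]
    nlinarith [sq_nonneg (‖x k ω‖ - 1)]
  have hfb : ∀ z : EuclideanSpace ℝ (Fin d),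
      |f z| ≤ |f 0| + ‖gradient f 0‖ * ‖z‖ + (3*L/2) * ‖z‖^2 := by
    intro z
    have h1 := hdesc 0 z
    have h2 := hdesc z 0
    rw [sub_zero] at h1
    rw [zero_sub, norm_neg] at h2
    have h3 : (inner ℝ (gradient f 0) z : ℝ) ≤ ‖gradient f 0‖ * ‖z‖ := real_inner_le_norm _ _
    have h4 : (inner ℝ (gradient f z) (-z) : ℝ) ≤ ‖gradient f z‖ * ‖z‖ := by
      have := real_inner_le_norm (gradient f z) (-z)
      rwa [norm_neg] at this
    have h5 := mul_le_mul_of_nonneg_right (hGrb z) (norm_nonneg z)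
    rw [abs_le]
    constructor
    · nlinarith [le_abs_self (f 0), neg_abs_le (f 0), norm_nonneg z]
    · nlinarith [le_abs_self (f 0), neg_abs_le (f 0), norm_nonneg z]
  have hfint : ∀ k, Integrable (fun ω => f (x k ω)) Q := by
    intro k
    apply Integrable.mono' (((integrable_const (|f 0|)).add
      ((hx1int k).const_mul ‖gradient f 0‖)).add ((hI k).const_mul (3*L/2)))
      ((hfcont.measurable.comp (hxmeas k)).aestronglyMeasurable)
    refine Filter.Eventually.of_forall fun ω => ?_
    simp only [Pi.add_apply]
    beta_reduce
    rw [Real.norm_eq_abs]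
    exact hfb (x k ω)
  have hBint : ∀ k, Integrable (fun ω => ‖gradient f (x k ω)‖^2) Q := by
    intro k
    exact (integrable_map_measure (hGrcont.norm.pow 2).aestronglyMeasurable
      (hxmeas k).aemeasurable).mp (hGr2μ k)
  -- the descent step in expectation
  have hstep : ∀ k, (∫ ω, f (x (k+1) ω) ∂Q) ≤ (∫ ω, f (x k ω) ∂Q)
      + (-γ + L*γ^2/2) * (∫ ω, ‖gradient f (x k ω)‖^2 ∂Q)
      + (L/2 * (γ * (1/(S:ℝ)))^2) * ((S:ℝ) * σ2) := by
    intro k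
    set c := γ * (1/(S:ℝ)) with hc
    have hcS : c * (S:ℝ) = γ := by rw [hc]; field_simp
    -- pointwise descent bound
    have hpt : ∀ ω, f (x (k+1) ω) ≤ f (x k ω)
        + (-γ + L*γ^2/2) * ‖gradient f (x k ω)‖^2
        + (L*γ*c - c) * (∑ i : Fin S, (inner ℝ (gradient f (x k ω))
            (G (x k ω) (ξ (k, i) ω) - gradient f (x k ω)) : ℝ))
        + (L/2 * c^2) * (∑ i : Fin S, ∑ j : Fin S,
            (inner ℝ (G (x k ω) (ξ (k, i) ω) - gradient f (x k ω))
              (G (x k ω) (ξ (k, j) ω) - gradient f (x k ω)) : ℝ)) := by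
      intro ω
      have hd := hdesc (x k ω) (x (k+1) ω)
      set u := gradient f (x k ω) with hu
      have hsumsub : ∑ i : Fin S, (G (x k ω) (ξ (k, i) ω) - u)
          = (∑ i : Fin S, G (x k ω) (ξ (k, i) ω)) - (S:ℝ) • u := by
        rw [Finset.sum_sub_distrib, Finset.sum_const, Finset.card_univ, Fintype.card_fin,
          ← Nat.cast_smul_eq_nsmul ℝ]
      have hsum : ∑ i : Fin S, G (x k ω) (ξ (k, i) ω)
          = (S:ℝ) • u + ∑ i : Fin S, (G (x k ω) (ξ (k, i) ω) - u) := by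
        rw [hsumsub]; abel
      have hmove : x (k+1) ω - x k ω
          = -(c • ((S:ℝ) • u + ∑ i : Fin S, (G (x k ω) (ξ (k, i) ω) - u))) := by
        rw [hxrec k ω, ← hsum]; abel
      have hinner : (inner ℝ u (x (k+1) ω - x k ω) : ℝ)
          = -(c * ((S:ℝ) * ‖u‖^2 + ∑ i : Fin S, (inner ℝ u (G (x k ω) (ξ (k, i) ω) - u) : ℝ))) := by
        rw [hmove, inner_neg_right, real_inner_smul_right, inner_add_right,
          real_inner_smul_right, real_inner_self_eq_norm_sq, inner_sum]
      have hDsnorm : ‖∑ i : Fin S, (G (x k ω) (ξ (k, i) ω) - u)‖^2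
          = ∑ i : Fin S, ∑ j : Fin S,
            (inner ℝ (G (x k ω) (ξ (k, i) ω) - u) (G (x k ω) (ξ (k, j) ω) - u) : ℝ) := by
        rw [← real_inner_self_eq_norm_sq, sum_inner]
        exact Finset.sum_congr rfl fun i _ => inner_sum _ _ _
      have hnorm : ‖x (k+1) ω - x k ω‖^2
          = c^2 * ((S:ℝ)^2 * ‖u‖^2
            + 2*(S:ℝ) * (∑ i : Fin S, (inner ℝ u (G (x k ω) (ξ (k, i) ω) - u) : ℝ))
            + ∑ i : Fin S, ∑ j : Fin S,
              (inner ℝ (G (x k ω) (ξ (k, i) ω) - u) (G (x k ω) (ξ (k, j) ω) - u) : ℝ)) := by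
        rw [hmove, norm_neg, norm_smul, mul_pow, Real.norm_eq_abs, sq_abs]
        congr 1
        rw [norm_add_sq_real, real_inner_smul_left, inner_sum, hDsnorm, norm_smul,
          Real.norm_eq_abs, Nat.abs_cast, mul_pow]
        ring
      rw [hinner, hnorm] at hd
      have hfinal : f (x k ω)
          + -(c * ((S:ℝ) * ‖u‖^2 + ∑ i : Fin S, (inner ℝ u (G (x k ω) (ξ (k, i) ω) - u) : ℝ)))
          + L / 2 * (c^2 * ((S:ℝ)^2 * ‖u‖^2
            + 2*(S:ℝ) * (∑ i : Fin S, (inner ℝ u (G (x k ω) (ξ (k, i) ω) - u) : ℝ))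
            + ∑ i : Fin S, ∑ j : Fin S,
              (inner ℝ (G (x k ω) (ξ (k, i) ω) - u) (G (x k ω) (ξ (k, j) ω) - u) : ℝ)))
          = f (x k ω) + (-γ + L*γ^2/2) * ‖u‖^2
          + (L*γ*c - c) * (∑ i : Fin S, (inner ℝ u (G (x k ω) (ξ (k, i) ω) - u) : ℝ))
          + (L/2 * c^2) * (∑ i : Fin S, ∑ j : Fin S,
              (inner ℝ (G (x k ω) (ξ (k, i) ω) - u) (G (x k ω) (ξ (k, j) ω) - u) : ℝ)) := by
        rw [← hcS]
        ring
      linarith [hd, hfinal.le, hfinal.ge]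
    -- integrability of pieces
    have hIT2 : ∀ i j : Fin S, Integrable (fun ω =>
        (inner ℝ (G (x k ω) (ξ (k, i) ω) - gradient f (x k ω))
          (G (x k ω) (ξ (k, j) ω) - gradient f (x k ω)) : ℝ)) Q := by
      intro i j
      by_cases h : i = j
      · subst h
        have heq : (fun ω => (inner ℝ (G (x k ω) (ξ (k, i) ω) - gradient f (x k ω))
            (G (x k ω) (ξ (k, i) ω) - gradient f (x k ω)) : ℝ))
            = fun ω => ‖G (x k ω) (ξ (k, i) ω) - gradient f (x k ω)‖^2 := by
          funext ω; rw [real_inner_self_eq_norm_sq]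
        rw [heq]
        exact (hD2 k i).1
      · exact (hD12 k i j h).1
    have hT1sumI : Integrable (fun ω => ∑ i : Fin S, (inner ℝ (gradient f (x k ω))
        (G (x k ω) (ξ (k, i) ω) - gradient f (x k ω)) : ℝ)) Q :=
      integrable_finset_sum _ fun i _ => (hT1 k i).1
    have hT2sumI : Integrable (fun ω => ∑ i : Fin S, ∑ j : Fin S,
        (inner ℝ (G (x k ω) (ξ (k, i) ω) - gradient f (x k ω))
          (G (x k ω) (ξ (k, j) ω) - gradient f (x k ω)) : ℝ)) Q :=
      integrable_finset_sum _ fun i _ => integrable_finset_sum _ fun j _ => hIT2 i j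
    -- values
    have hVT1 : ∫ ω, (∑ i : Fin S, (inner ℝ (gradient f (x k ω))
        (G (x k ω) (ξ (k, i) ω) - gradient f (x k ω)) : ℝ)) ∂Q = 0 := by
      rw [integral_finset_sum _ fun i _ => (hT1 k i).1]
      exact Finset.sum_eq_zero fun i _ => (hT1 k i).2
    have hVT2 : ∫ ω, (∑ i : Fin S, ∑ j : Fin S,
        (inner ℝ (G (x k ω) (ξ (k, i) ω) - gradient f (x k ω))
          (G (x k ω) (ξ (k, j) ω) - gradient f (x k ω)) : ℝ)) ∂Q ≤ (S:ℝ) * σ2 := by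
      rw [integral_finset_sum _ fun i _ => integrable_finset_sum _ fun j _ => hIT2 i j]
      calc ∑ i : Fin S, ∫ ω, (∑ j : Fin S,
          (inner ℝ (G (x k ω) (ξ (k, i) ω) - gradient f (x k ω))
            (G (x k ω) (ξ (k, j) ω) - gradient f (x k ω)) : ℝ)) ∂Q
          ≤ ∑ _i : Fin S, σ2 := by
            apply Finset.sum_le_sum
            intro i _
            rw [integral_finset_sum _ fun j _ => hIT2 i j,
              Finset.sum_eq_single i (fun j _ hji => (hD12 k i j (Ne.symm hji)).2)
                (fun h => absurd (Finset.mem_univ i) h)]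
            have heq : (fun ω => (inner ℝ (G (x k ω) (ξ (k, i) ω) - gradient f (x k ω))
                (G (x k ω) (ξ (k, i) ω) - gradient f (x k ω)) : ℝ))
                = fun ω => ‖G (x k ω) (ξ (k, i) ω) - gradient f (x k ω)‖^2 := by
              funext ω; rw [real_inner_self_eq_norm_sq]
            rw [heq]
            exact (hD2 k i).2
        _ = (S:ℝ) * σ2 := by
            rw [Finset.sum_const, Finset.card_univ, Fintype.card_fin, nsmul_eq_mul]
    -- put it together
    have hRHS1 : Integrable (fun ω => f (x k ω)
        + (-γ + L*γ^2/2) * ‖gradient f (x k ω)‖^2) Q :=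
      (hfint k).add ((hBint k).const_mul _)
    have hRHS2 : Integrable (fun ω => f (x k ω)
        + (-γ + L*γ^2/2) * ‖gradient f (x k ω)‖^2
        + (L*γ*c - c) * (∑ i : Fin S, (inner ℝ (gradient f (x k ω))
            (G (x k ω) (ξ (k, i) ω) - gradient f (x k ω)) : ℝ))) Q :=
      hRHS1.add (hT1sumI.const_mul _)
    have hRHS3 : Integrable (fun ω => f (x k ω)
        + (-γ + L*γ^2/2) * ‖gradient f (x k ω)‖^2
        + (L*γ*c - c) * (∑ i : Fin S, (inner ℝ (gradient f (x k ω))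
            (G (x k ω) (ξ (k, i) ω) - gradient f (x k ω)) : ℝ))
        + (L/2 * c^2) * (∑ i : Fin S, ∑ j : Fin S,
            (inner ℝ (G (x k ω) (ξ (k, i) ω) - gradient f (x k ω))
              (G (x k ω) (ξ (k, j) ω) - gradient f (x k ω)) : ℝ))) Q :=
      hRHS2.add (hT2sumI.const_mul _)
    calc ∫ ω, f (x (k+1) ω) ∂Q
        ≤ ∫ ω, (f (x k ω) + (-γ + L*γ^2/2) * ‖gradient f (x k ω)‖^2
          + (L*γ*c - c) * (∑ i : Fin S, (inner ℝ (gradient f (x k ω))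
              (G (x k ω) (ξ (k, i) ω) - gradient f (x k ω)) : ℝ))
          + (L/2 * c^2) * (∑ i : Fin S, ∑ j : Fin S,
              (inner ℝ (G (x k ω) (ξ (k, i) ω) - gradient f (x k ω))
                (G (x k ω) (ξ (k, j) ω) - gradient f (x k ω)) : ℝ))) ∂Q :=
          integral_mono (hfint (k+1)) hRHS3 hpt
      _ = (∫ ω, f (x k ω) ∂Q) + (-γ + L*γ^2/2) * (∫ ω, ‖gradient f (x k ω)‖^2 ∂Q)
          + (L*γ*c - c) * (∫ ω, (∑ i : Fin S, (inner ℝ (gradient f (x k ω))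
              (G (x k ω) (ξ (k, i) ω) - gradient f (x k ω)) : ℝ)) ∂Q)
          + (L/2 * c^2) * (∫ ω, (∑ i : Fin S, ∑ j : Fin S,
              (inner ℝ (G (x k ω) (ξ (k, i) ω) - gradient f (x k ω))
                (G (x k ω) (ξ (k, j) ω) - gradient f (x k ω)) : ℝ)) ∂Q) := by
          rw [integral_add hRHS2 (hT2sumI.const_mul _), integral_add hRHS1 (hT1sumI.const_mul _),
            integral_add (hfint k) ((hBint k).const_mul _), integral_const_mul,
            integral_const_mul, integral_const_mul]
      _ ≤ (∫ ω, f (x k ω) ∂Q) + (-γ + L*γ^2/2) * (∫ ω, ‖gradient f (x k ω)‖^2 ∂Q)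
          + (L/2 * c^2) * ((S:ℝ) * σ2) := by
          rw [hVT1]
          have hc2 : 0 ≤ L/2 * c^2 := by positivity
          nlinarith [mul_le_mul_of_nonneg_left hVT2 hc2]
  -- telescoping
  set B : ℕ → ℝ := fun k => ∫ ω, ‖gradient f (x k ω)‖^2 ∂Q with hBdef
  set A : ℕ → ℝ := fun k => ∫ ω, f (x k ω) ∂Q with hAdef
  set R : ℝ := (L/2 * (γ * (1/(S:ℝ)))^2) * ((S:ℝ) * σ2) with hRdef
  have hB0 : ∀ k, 0 ≤ B k := fun k => integral_nonneg fun ω => by positivity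
  have hR0 : 0 ≤ R := by rw [hRdef]; positivity
  have hAlb : ∀ k, fstar ≤ A k := by
    intro k
    calc fstar = ∫ _, fstar ∂Q := by simp
      _ ≤ A k := integral_mono (integrable_const _) (hfint k) (fun ω => hlb _)
  have hA0 : A 0 = f x₀ := by
    rw [hAdef]
    have hx : (fun ω => f (x 0 ω)) = fun _ => f x₀ := funext fun ω => by rw [hx0]
    beta_reduce
    rw [hx]
    simp
  have h2Lγ : 1 ≤ 2*L*γ := by
    rw [div_le_iff₀ (by positivity)] at hγlow
    linarith
  have hstep' : ∀ k, A (k+1) ≤ A k - γ/2 * B k + R := by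
    intro k
    have h := hstep k
    have hcoef : (-γ + L*γ^2/2) ≤ -(γ/2) := by nlinarith [hγpos, hγL]
    nlinarith [hB0 k, mul_le_mul_of_nonneg_right hcoef (hB0 k)]
  have htel : ∀ K : ℕ, A K + γ/2 * (∑ k ∈ Finset.range K, B k) ≤ f x₀ + K * R := by
    intro K
    induction K with
    | zero => simp [hA0]
    | succ n ih =>
      rw [Finset.sum_range_succ]
      have h := hstep' n
      push_cast
      nlinarith [ih, h]
  -- conclusion
  intro K hK
  rcases Nat.eq_zero_or_pos K with hK0 | hKpos
  · subst hK0; simp [hε.le]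
  have hK1 : (1:ℝ) ≤ K := by exact_mod_cast hKpos
  have hKpos' : (0:ℝ) < K := by linarith
  have hKε : 24*Δ*L ≤ ε * K := by
    rw [div_le_iff₀ hε] at hK
    linarith
  have hsum : γ/2 * (∑ k ∈ Finset.range K, B k) ≤ Δ + K * R := by
    have h1 := htel K
    have h2 := hAlb K
    rw [hΔ]
    linarith
  have hSig : (∑ k ∈ Finset.range K, B k) ≤ 2/γ * (Δ + K * R) := by
    have h2γ : (0:ℝ) < 2/γ := by positivity
    have h := mul_le_mul_of_nonneg_left hsum h2γ.le
    calc (∑ k ∈ Finset.range K, B k) = 2/γ * (γ/2 * (∑ k ∈ Finset.range K, B k)) := by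
          field_simp
      _ ≤ 2/γ * (Δ + K * R) := h
  have hγσ : γ * (2*L*σ2) ≤ ε * S := (le_div_iff₀ (by positivity)).mp hγ2
  have hb1 : 2*Δ/(γ*(K:ℝ)) ≤ ε/6 := by
    rw [div_le_div_iff₀ (by positivity) (by norm_num)]
    nlinarith [mul_le_mul_of_nonneg_left h2Lγ (by positivity : (0:ℝ) ≤ ε*K),
      mul_le_mul_of_nonneg_right hKε hγpos.le, hΔ0, hγpos, hKpos', hε]
  have hb2 : 2*R/γ ≤ ε/2 := by
    have hReq : 2*R/γ = L*γ*σ2/(S:ℝ) := by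
      rw [hRdef]
      field_simp
    rw [hReq, div_le_div_iff₀ hSpos (by norm_num)]
    nlinarith [hγσ]
  calc (1/(K:ℝ)) * ∑ k ∈ Finset.range K, B k
      ≤ (1/(K:ℝ)) * (2/γ * (Δ + K * R)) :=
        mul_le_mul_of_nonneg_left hSig (by positivity)
    _ = 2*Δ/(γ*(K:ℝ)) + 2*R/γ := by
        field_simp
    _ ≤ ε/6 + ε/2 := add_le_add hb1 hb2
    _ ≤ ε := by linarith
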